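/- Let t ≥ 1 be an integer and let i ∈ {1, …, t}. Then there exists a positive integer k (one may take k = 2t) and upper-triangular matrices A, M, N, B in ℤ^{k×k} such that for all natural numbers a₁, …, a_t: A·M^{a₁}·N·M^{a₂}·N ⋯ N·M^{a_t}·B = a_i · E_k, where E_k is the k×k matrix whose only nonzero entry is a 1 in position (1, k). -/

import Mathlib

/-- A square integer matrix is upper triangular if every entry below the diagonal is 0. -/
def UpperTri {k : ℕ} (A : Matrix (Fin k) (Fin k) ℤ) : Prop :=
  ∀ p q : Fin k, (q : ℕ) < (p : ℕ) → A p q = 0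

/-- The `k × k` integer matrix whose only nonzero entry is a `1` in position `(1, k)`. -/
def Emat (k : ℕ) : Matrix (Fin k) (Fin k) ℤ :=
  Matrix.of fun i j => if (i : ℕ) = 0 ∧ (j : ℕ) = k - 1 then 1 else 0

open Matrix
private def Mm (t : ℕ) (i : Fin t) : Matrix (Fin (t+1)) (Fin (t+1)) ℤ :=
  1 + single i.castSucc (Fin.last t) 1

private lemma Mpow (t : ℕ) (i : Fin t) (a : ℕ) :
    (Mm t i) ^ a = 1 + (a:ℤ) • single i.castSucc (Fin.last t) 1 := by
  have hne : Fin.last t ≠ i.castSucc := by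
    intro h
    have := congrArg (fun x : Fin (t+1) => (x:ℕ)) h
    simp at this
    omega
  induction a with
  | zero => simp
  | succ n ih =>
    rw [pow_succ, ih]
    have hE : single i.castSucc (Fin.last t) (1:ℤ) *
        single i.castSucc (Fin.last t) 1 = 0 :=
      single_mul_single_of_ne (i := i.castSucc) (h := hne) (c := (1:ℤ)) (d := 1)
    unfold Mm
    rw [add_mul, mul_add, mul_add, one_mul, mul_one, smul_mul_assoc, hE, smul_zero]
    push_cast
    rw [add_smul, one_smul]
    rw [add_zero, one_mul]
    abel

private lemma rowStd {n : ℕ} (p q m : Fin n) :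
    (single p q (1:ℤ)) m = if m = p then Pi.single q 1 else 0 := by
  funext v
  by_cases h : m = p
  · subst h; simp [single, Pi.single_apply, eq_comm]
  · have h2 : ¬ (p = m ∧ q = v) := fun hh => h hh.1.symm
    simp [single, h, h2]

private lemma rowM (t : ℕ) (i : Fin t) (a : ℕ) (m : Fin (t+1)) :
    Pi.single m (1:ℤ) ᵥ* (Mm t i) ^ a =
      Pi.single m 1 + (if (m:ℕ) = (i:ℕ) then (a:ℤ) else 0) • Pi.single (Fin.last t) 1 := by
  rw [Mpow, single_one_vecMul]
  funext v
  simp only [Matrix.row_apply, Matrix.add_apply, Matrix.smul_apply, Matrix.one_apply, single, of_apply,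
    Pi.add_apply, Pi.smul_apply, Pi.single_apply, smul_eq_mul, Fin.ext_iff,
    Fin.coe_castSucc, Fin.val_last]
  split_ifs <;> simp only [mul_one, mul_zero, zero_mul, one_mul, add_zero, zero_add] <;> omega

private def Nn (t : ℕ) : Matrix (Fin (t+1)) (Fin (t+1)) ℤ :=
  Matrix.of fun p q => if ((q:ℕ) = (p:ℕ)+1 ∨ ((p:ℕ) = t ∧ (q:ℕ) = t)) then 1 else 0

private lemma rowN (t : ℕ) (m : ℕ) (hm : m < t) :
    Pi.single (⟨m, by omega⟩ : Fin (t+1)) (1:ℤ) ᵥ* Nn t = Pi.single ⟨m+1, by omega⟩ 1 := by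
  rw [single_one_vecMul]
  funext q
  simp only [Nn, Matrix.of_apply, Pi.single_apply, Fin.ext_iff]
  split_ifs <;> simp_all <;> omega

private lemma rowN_last (t : ℕ) :
    Pi.single (Fin.last t) (1:ℤ) ᵥ* Nn t = Pi.single (Fin.last t) 1 := by
  rw [single_one_vecMul]
  funext q
  simp only [Nn, Matrix.of_apply, Pi.single_apply, Fin.ext_iff, Fin.val_last]
  have := q.isLt
  split_ifs <;> simp_all <;> omega

private lemma rowLast_M (t : ℕ) (i : Fin t) (a : ℕ) :
    Pi.single (Fin.last t) (1:ℤ) ᵥ* (Mm t i) ^ a = Pi.single (Fin.last t) 1 := by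
  have h2 : ¬ ((Fin.last t : Fin (t+1)) : ℕ) = (i:ℕ) := by
    have := i.isLt; simp only [Fin.val_last]; omega
  rw [rowM, if_neg h2, zero_smul, add_zero]

private lemma vecMul_prod_fixed {n : ℕ} (v : Fin n → ℤ)
    (l : List (Matrix (Fin n) (Fin n) ℤ)) (h : ∀ X ∈ l, v ᵥ* X = v) :
    v ᵥ* l.prod = v := by
  induction l with
  | nil => simp
  | cons x xs ih =>
    rw [List.prod_cons, ← Matrix.vecMul_vecMul, h x (by simp)]
    exact ih fun X hX => h X (by simp [hX])

private lemma mem_intersperse {α : Type*} (s : α) :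
    ∀ (l : List α) (x : α), x ∈ List.intersperse s l → x = s ∨ x ∈ l
  | [], x, h => by simp at h
  | [a], x, h => by right; simpa using h
  | a :: b :: rest, x, h => by
      rw [List.intersperse_cons_cons] at h
      simp only [List.mem_cons] at h ⊢
      rcases h with h | h | h
      · exact Or.inr (Or.inl h)
      · exact Or.inl h
      · rcases mem_intersperse s (b :: rest) x h with h | h
        · exact Or.inl h
        · simp only [List.mem_cons] at h; tauto

private lemma rowLast_prod (t : ℕ) (i : Fin t) (l : List ℕ) :
    Pi.single (Fin.last t) (1:ℤ) ᵥ*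
      (List.intersperse (Nn t) (l.map fun a => (Mm t i) ^ a)).prod =
      Pi.single (Fin.last t) 1 := by
  apply vecMul_prod_fixed
  intro X hX
  rcases mem_intersperse _ _ _ hX with h | h
  · rw [h]; exact rowN_last t
  · obtain ⟨a, _, rfl⟩ := List.mem_map.mp h
    exact rowLast_M t i a

private lemma key (t : ℕ) (i : Fin t) :
    ∀ (l : List ℕ), l ≠ [] → ∀ (m : ℕ) (hm : m + l.length ≤ t),
      Pi.single (⟨m, by omega⟩ : Fin (t+1)) (1:ℤ) ᵥ*
          (List.intersperse (Nn t) (l.map fun a => (Mm t i) ^ a)).prod =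
        Pi.single (⟨m + l.length - 1, by omega⟩ : Fin (t+1)) 1 +
          (if m ≤ (i:ℕ) then ((l.getD ((i:ℕ) - m) 0 : ℕ) : ℤ) else 0) •
            Pi.single (Fin.last t) 1
  | [], h, _, _ => absurd rfl h
  | [a], _, m, hm => by
      have h2 : (if m ≤ (i:ℕ) then (([a].getD ((i:ℕ) - m) 0 : ℕ) : ℤ) else 0)
          = (if m = (i:ℕ) then (a:ℤ) else 0) := by
        rcases Nat.lt_trichotomy m i with h | h | h
        · have he : (i:ℕ) - m = ((i:ℕ) - m - 1) + 1 := by omega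
          rw [if_pos (by omega), if_neg (by omega), he]
          simp
        · simp [h]
        · rw [if_neg (by omega), if_neg (by omega)]
      simp only [List.map_cons, List.map_nil, List.intersperse_singleton,
        List.prod_singleton, List.length_cons, List.length_nil, h2]
      rw [rowM]
      simp
  | a :: b :: rest, _, m, hm => by
      have hm2 : m + (a :: b :: rest).length ≤ t := hm
      simp only [List.length_cons] at hm2
      have hmt : m < t := by omega
      have ih := key t i (b :: rest) (by simp) (m+1) (by simp; omega)
      have hlast := rowLast_prod t i (b :: rest)
      simp only [List.map_cons, List.length_cons] at ih hlast ⊢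
      rw [List.intersperse_cons_cons, List.prod_cons, List.prod_cons,
        ← Matrix.vecMul_vecMul, ← Matrix.vecMul_vecMul, rowM,
        Matrix.add_vecMul, Matrix.smul_vecMul, rowN t m hmt, rowN_last,
        Matrix.add_vecMul, Matrix.smul_vecMul, ih, hlast]
      have hidx : (⟨m + 1 + (rest.length + 1) - 1, by omega⟩ : Fin (t+1)) =
          ⟨m + (rest.length + 1 + 1) - 1, by omega⟩ := by
        apply Fin.ext; simp; omega
      rw [hidx]
      have hc : (if m ≤ (i:ℕ) then (((a :: b :: rest).getD ((i:ℕ) - m) 0 : ℕ) : ℤ) else 0)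
          = (if m + 1 ≤ (i:ℕ) then (((b :: rest).getD ((i:ℕ) - (m+1)) 0 : ℕ) : ℤ) else 0)
            + (if (m:ℕ) = (i:ℕ) then (a:ℤ) else 0) := by
        rcases Nat.lt_trichotomy m i with h | h | h
        · have he : (i:ℕ) - m = ((i:ℕ) - (m+1)) + 1 := by omega
          rw [if_pos (by omega), if_pos (by omega), if_neg (by omega), he,
            List.getD_cons_succ, add_zero]
        · rw [if_pos (by omega), if_neg (by omega), if_pos (by omega)]
          simp [← h]
        · rw [if_neg (by omega), if_neg (by omega), if_neg (by omega)]
          simp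
      rw [hc, add_smul]
      abel

private lemma sandwich {n : ℕ} (X : Matrix (Fin n) (Fin n) ℤ) (p q r s : Fin n) :
    single p q (1:ℤ) * X * single r s 1 = X q r • single p s 1 := by
  ext u v
  by_cases hu : u = p <;> by_cases hv : v = s <;>
    simp [hu, hv, single, Matrix.mul_apply, Finset.sum_ite_eq',
      Finset.sum_ite_eq, ite_and, mul_ite, ite_mul, mul_comm] <;>
    split_ifs <;> simp_all

private lemma EmatEq (t : ℕ) :
    Emat (t+1) = single (0 : Fin (t+1)) (Fin.last t) (1:ℤ) := by
  ext p q
  simp only [Emat, single, Matrix.of_apply]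
  have := p.isLt; have := q.isLt
  by_cases h1 : (p:ℕ) = 0 <;> by_cases h2 : (q:ℕ) = t <;>
    simp [Fin.ext_iff, Fin.val_last, eq_comm, h1, h2]

theorem coordinate_representable (t : ℕ) (ht : 1 ≤ t) (i : Fin t) :
    ∃ k : ℕ, 0 < k ∧ ∃ A M N B : Matrix (Fin k) (Fin k) ℤ,
      UpperTri A ∧ UpperTri M ∧ UpperTri N ∧ UpperTri B ∧
      ∀ a : Fin t → ℕ,
        ((A :: List.intersperse N (List.ofFn fun j : Fin t => M ^ a j)) ++ [B]).prod =
          (a i : ℤ) • Emat k := by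
  refine ⟨t+1, Nat.succ_pos t, single 0 0 1, Mm t i, Nn t,
    single (Fin.last t) (Fin.last t) 1, ?_, ?_, ?_, ?_, ?_⟩
  · intro p q hlt
    simp only [single, Matrix.of_apply, ite_eq_right_iff, and_imp]
    intro h1 h2
    rw [← h1, ← h2] at hlt
    exact absurd hlt (lt_irrefl _)
  · intro p q hlt
    simp only [Mm, Matrix.add_apply, Matrix.one_apply, single, Matrix.of_apply]
    rw [if_neg, if_neg, add_zero]
    · rintro ⟨h1, h2⟩
      rw [← h2] at hlt
      have := p.isLt
      simp only [Fin.val_last] at hlt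
      omega
    · intro h
      rw [h] at hlt
      exact absurd hlt (lt_irrefl _)
  · intro p q hlt
    simp only [Nn, Matrix.of_apply]
    have := q.isLt
    exact if_neg (by omega)
  · intro p q hlt
    simp only [single, Matrix.of_apply, ite_eq_right_iff, and_imp]
    intro h1 h2
    rw [← h1, ← h2] at hlt
    exact absurd hlt (lt_irrefl _)
  · intro a
    rw [List.prod_append, List.prod_cons, List.prod_singleton, sandwich]
    have hofn : (List.ofFn fun j : Fin t => (Mm t i) ^ (a j)) =
        (List.ofFn a).map fun n => (Mm t i) ^ n := by
      rw [List.map_ofFn]; rfl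
    rw [hofn]
    have hkey := key t i (List.ofFn a) (by simp; omega) 0 (by simp)
    rw [single_one_vecMul] at hkey
    have h := congrFun hkey (Fin.last t)
    have hilt := i.isLt
    simp only [Matrix.row_apply, Pi.add_apply, Pi.smul_apply, Pi.single_apply, Fin.ext_iff, Fin.val_last,
      smul_eq_mul, List.length_ofFn, Nat.zero_add, Nat.sub_zero] at h
    rw [if_pos (Nat.zero_le _), if_neg (by omega)] at h
    simp only [if_true, zero_add, mul_one] at h
    rw [List.getD_eq_getElem _ _ (by simpa using hilt)] at h
    simp only [List.getElem_ofFn, Fin.eta] at h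
    have e0 : (0 : Fin (t+1)) = (⟨0, by omega⟩ : Fin (t+1)) := by
      apply Fin.ext; simp
    rw [EmatEq, e0, h]
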